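/- (Borel–Bernstein for θ-expansions, convergence part) Let φ : ℕ₊ → (0,∞) be a function with Σ_{n≥1} 1/φ(n) < ∞. Then the set A_φ = {x ∈ Ω : a_n(x) > φ(n) for infinitely many n} has normalized Lebesgue measure λ_θ(A_φ) = 0. -/

import Mathlib

noncomputable section
open MeasureTheory Filter Set

namespace Theta

/-- θ = 1/√m -/
def th (m : ℕ) : ℝ := 1 / Real.sqrt m

/-- The θ-expansion map T_θ on [0,θ]. -/
def T (m : ℕ) (x : ℝ) : ℝ := if x = 0 then 0 else 1 / x - th m * ⌊1 / (x * th m)⌋₊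

/-- The n-th digit a_n(x) (n ≥ 1), a_n(x) = a_1(T_θ^{n-1} x) with a_1(x) = ⌊1/(xθ)⌋. -/
def a (m n : ℕ) (x : ℝ) : ℕ := ⌊1 / ((T m)^[n - 1] x * th m)⌋₊

/-- Ω: the irrationals in (0,θ). -/
def Omega (m : ℕ) : Set ℝ := {x | x ∈ Set.Ioo 0 (th m) ∧ Irrational x}

/-- Convergent numerators, shifted: `p m x (n+1)` is p_n(x), `p m x 0` is p_{-1} = 1. -/
def p (m : ℕ) (x : ℝ) : ℕ → ℝ
  | 0 => 1
  | 1 => 0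
  | n + 2 => (a m (n + 1) x) * th m * p m x (n + 1) + p m x n

/-- Convergent denominators, shifted: `q m x (n+1)` is q_n(x), `q m x 0` is q_{-1} = 0. -/
def q (m : ℕ) (x : ℝ) : ℕ → ℝ
  | 0 => 0
  | 1 => 1
  | n + 2 => (a m (n + 1) x) * th m * q m x (n + 1) + q m x n

/-- Normalized Lebesgue measure on [0,θ]: λ_θ(A) = Leb(A)/θ (as a real number). -/
def lam (m : ℕ) (A : Set ℝ) : ℝ := (volume A).toReal / th m


open scoped ENNReal

variable {m : ℕ}

lemma mcast_pos (hm : 2 ≤ m) : (0:ℝ) < m := by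
  exact_mod_cast Nat.lt_of_lt_of_le (by norm_num) hm

lemma th_pos (hm : 2 ≤ m) : 0 < th m := by
  have h : (0:ℝ) < Real.sqrt m := Real.sqrt_pos.2 (mcast_pos hm)
  simpa [th] using h

lemma th_sq (hm : 2 ≤ m) : th m * th m = 1 / m := by
  have h : Real.sqrt m * Real.sqrt m = m := Real.mul_self_sqrt (Nat.cast_nonneg m)
  unfold th
  rw [div_mul_div_comm, one_mul, h]

lemma m_th (hm : 2 ≤ m) : (m : ℝ) * th m = (th m)⁻¹ := by
  have ht := th_pos hm
  have h2 := th_sq hm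
  have hm0 := mcast_pos hm
  field_simp at h2 ⊢
  nlinarith

lemma th_sq_le (hm : 2 ≤ m) : th m * th m ≤ 1/2 := by
  rw [th_sq hm]
  have : (2:ℝ) ≤ m := by exact_mod_cast hm
  rw [div_le_div_iff₀ (mcast_pos hm) (by norm_num)]
  linarith

/-- invariant density -/
def den (m : ℕ) (x : ℝ) : ℝ≥0∞ := ENNReal.ofReal (1 / (1 + th m * x))

lemma den_measurable : Measurable (den m) := by
  apply ENNReal.measurable_ofReal.comp
  exact Measurable.div measurable_const
    (measurable_const.add (measurable_const.mul measurable_id))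

/-- invariant measure -/
def mu (m : ℕ) : Measure ℝ := (volume.restrict (Ioc 0 (th m))).withDensity (den m)

lemma mu_apply {S : Set ℝ} (hS : MeasurableSet S) :
    mu m S = ∫⁻ x in S ∩ Ioc 0 (th m), den m x := by
  rw [mu, withDensity_apply _ hS, Measure.restrict_restrict hS]


/-- antiderivative -/
def FF (m : ℕ) (x : ℝ) : ℝ := (1 / th m) * Real.log (1 + th m * x)

lemma hasDeriv_FF (hm : 2 ≤ m) {x : ℝ} (hx : 0 ≤ x) :
    HasDerivAt (FF m) (1 / (1 + th m * x)) x := by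
  have ht := th_pos hm
  have hne : 1 + th m * x ≠ 0 := by positivity
  have h1 : HasDerivAt (fun y : ℝ => 1 + th m * y) (th m) x := by
    simpa using ((hasDerivAt_id x).const_mul (th m)).const_add 1
  have h2 := (Real.hasDerivAt_log hne).comp x h1
  have h3 := h2.const_mul (1 / th m)
  convert h3 using 1
  · rfl
  · rfl
  · rfl
  · field_simp

lemma mu_Ioc (hm : 2 ≤ m) {c d : ℝ} (hc : 0 ≤ c) (hcd : c ≤ d) (hd : d ≤ th m) :
    mu m (Ioc c d) = ENNReal.ofReal (FF m d - FF m c) := by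
  have ht := th_pos hm
  have hsub : Ioc c d ⊆ Ioc 0 (th m) := Ioc_subset_Ioc hc hd |>.trans (Ioc_subset_Ioc_left le_rfl)
  rw [mu_apply measurableSet_Ioc, inter_eq_self_of_subset_left hsub]
  have hcont : ContinuousOn (fun x : ℝ => 1 / (1 + th m * x)) (Icc c d) := by
    apply ContinuousOn.div continuousOn_const
    · exact (continuousOn_const.add (continuousOn_const.mul continuousOn_id))
    · intro x hx
      have : 0 ≤ x := le_trans hc hx.1
      positivity
  have hint : IntegrableOn (fun x : ℝ => 1 / (1 + th m * x)) (Ioc c d) :=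
    (hcont.integrableOn_Icc).mono_set Ioc_subset_Icc_self
  have hae : 0 ≤ᵐ[volume.restrict (Ioc c d)] fun x : ℝ => 1 / (1 + th m * x) := by
    filter_upwards [ae_restrict_mem measurableSet_Ioc] with x hx
    have : (0:ℝ) ≤ x := le_of_lt (lt_of_le_of_lt hc hx.1)
    positivity
  simp only [den]
  rw [← ofReal_integral_eq_lintegral_ofReal hint hae]
  congr 1
  have := intervalIntegral.integral_eq_sub_of_hasDerivAt
    (f := FF m) (f' := fun x => 1 / (1 + th m * x)) (a := c) (b := d)
    (fun x hx => hasDeriv_FF hm (le_trans hc (by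
      rcases hx with ⟨h1, h2⟩
      simpa [min_eq_left hcd] using h1)))
    ((hcont.mono (by rw [uIcc_of_le hcd])).intervalIntegrable)
  rw [intervalIntegral.integral_of_le hcd] at this
  rw [this]

lemma inv_m_th (hm : 2 ≤ m) : 1 / ((m:ℝ) * th m) = th m := by
  rw [m_th hm, one_div, inv_inv]

lemma kth_pos (hm : 2 ≤ m) {k : ℕ} (hk : m ≤ k) : 0 < (k:ℝ) * th m := by
  have := th_pos hm
  have hk' : (0:ℝ) < k := lt_of_lt_of_le (mcast_pos hm) (by exact_mod_cast hk)
  positivity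

/-- The branch interval for digit `k = m + j`. -/
def br (m : ℕ) (b : ℝ) (j : ℕ) : Set ℝ :=
  Icc (1 / (b + ((m + j : ℕ) : ℝ) * th m)) (1 / (((m + j : ℕ) : ℝ) * th m))

lemma preimage_decomp (hm : 2 ≤ m) {b : ℝ} (hb0 : 0 ≤ b) (hbt : b < th m) :
    T m ⁻¹' (Iic b) ∩ Ioc 0 (th m) = ⋃ j : ℕ, br m b j := by
  have ht := th_pos hm
  ext x
  simp only [mem_inter_iff, mem_preimage, mem_Iic, mem_Ioc, mem_iUnion, br, mem_Icc]
  constructor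
  · rintro ⟨hTb, hx0, hxt⟩
    have hxne : x ≠ 0 := ne_of_gt hx0
    rw [T, if_neg hxne] at hTb
    set u : ℝ := 1 / (x * th m) with hu
    have hxtpos : 0 < x * th m := by positivity
    have hum : (m:ℝ) ≤ u := by
      rw [hu, le_one_div (mcast_pos hm) hxtpos]
      calc x * th m ≤ th m * th m := by nlinarith
        _ = 1 / m := th_sq hm
    set k := ⌊u⌋₊ with hk
    have hmk : m ≤ k := Nat.le_floor (by exact_mod_cast hum)
    have hku : (k:ℝ) ≤ u := Nat.floor_le (le_trans (mcast_pos hm).le hum)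
    refine ⟨k - m, ?_⟩
    have hkmm : m + (k - m) = k := Nat.add_sub_cancel' hmk
    rw [hkmm]
    have hkt : 0 < (k:ℝ) * th m := kth_pos hm hmk
    have hbkt : 0 < b + (k:ℝ) * th m := by linarith
    constructor
    · -- 1/(b + kθ) ≤ x   from  1/x - kθ ≤ b
      rw [div_le_iff₀ hbkt]
      have h1 : 1 / x ≤ b + (k:ℝ) * th m := by
        have : 1 / x - th m * k ≤ b := hTb
        linarith [this]
      calc (1:ℝ) = x * (1/x) := by field_simp
        _ ≤ x * (b + (k:ℝ) * th m) := by nlinarith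
    · -- x ≤ 1/(kθ)  from  k ≤ u = 1/(xθ)
      rw [le_div_iff₀ hkt]
      have h2 : (k:ℝ) * (x * th m) ≤ 1 := by
        have h3 := mul_le_mul_of_nonneg_right hku hxtpos.le
        rwa [hu, one_div, inv_mul_cancel₀ (ne_of_gt hxtpos)] at h3
      nlinarith
  · rintro ⟨j, hx1, hx2⟩
    set k : ℕ := m + j with hkdef
    have hmk : m ≤ k := Nat.le_add_right m j
    have hkt : 0 < (k:ℝ) * th m := kth_pos hm hmk
    have hbkt : 0 < b + (k:ℝ) * th m := by linarith
    have hx0 : 0 < x := lt_of_lt_of_le (by positivity) hx1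
    have hxt : x ≤ th m := by
      refine le_trans hx2 ?_
      rw [div_le_iff₀ hkt]
      have hmk' : (m:ℝ) * th m ≤ (k:ℝ) * th m := by
        have : (m:ℝ) ≤ k := by exact_mod_cast hmk
        nlinarith [ht]
      calc (1:ℝ) = th m * ((m:ℝ) * th m) := by
            rw [m_th hm]; field_simp
        _ ≤ th m * ((k:ℝ) * th m) := by nlinarith
    have hxtpos : 0 < x * th m := by positivity
    set u : ℝ := 1 / (x * th m) with hu
    have hkpos : (0:ℝ) < (k:ℝ) := lt_of_lt_of_le (mcast_pos hm) (by exact_mod_cast hmk)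
    have huk : (k:ℝ) ≤ u := by
      rw [hu, le_one_div hkpos hxtpos]
      rw [le_div_iff₀ hkt] at hx2
      rw [le_div_iff₀ hkpos]
      nlinarith
    have huk1 : u < (k:ℝ) + 1 := by
      rw [hu, div_lt_iff₀ hxtpos]
      rw [div_le_iff₀ hbkt] at hx1
      -- 1 ≤ (b + kθ) x , want 1 < (k+1) (x θ)
      have hblt : b + (k:ℝ) * th m < ((k:ℝ)+1) * th m := by nlinarith
      nlinarith
    have hfl : ⌊u⌋₊ = k := by
      rw [Nat.floor_eq_iff (le_trans (by positivity) huk)]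
      exact ⟨by exact_mod_cast huk, by exact_mod_cast huk1⟩
    refine ⟨?_, hx0, hxt⟩
    rw [T, if_neg (ne_of_gt hx0), hfl]
    rw [div_le_iff₀ hbkt] at hx1
    -- 1 ≤ (b + kθ) x  ⟹ 1/x ≤ b + kθ
    have : 1 / x ≤ b + (k:ℝ) * th m := by
      rw [div_le_iff₀ hx0]; nlinarith
    linarith

lemma mu_ac : mu m ≪ volume :=
  (withDensity_absolutelyContinuous _ _).trans
    (Measure.absolutelyContinuous_of_le Measure.restrict_le_self)

lemma mu_Icc (hm : 2 ≤ m) {c d : ℝ} (hc : 0 ≤ c) (hcd : c ≤ d) (hd : d ≤ th m) :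
    mu m (Icc c d) = ENNReal.ofReal (FF m d - FF m c) := by
  rw [← mu_Ioc hm hc hcd hd]
  refine le_antisymm ?_ (measure_mono Ioc_subset_Icc_self)
  calc mu m (Icc c d) ≤ mu m ({c} ∪ Ioc c d) := by
        rw [← Ioc_insert_left hcd]; exact measure_mono (by simp)
    _ ≤ mu m {c} + mu m (Ioc c d) := measure_union_le _ _
    _ = mu m (Ioc c d) := by rw [mu_ac (measure_singleton _), zero_add]

/-- telescoping function -/
def G (m : ℕ) (b : ℝ) (k : ℕ) : ℝ :=
  (1 / th m) * (Real.log (b + (k:ℝ) * th m) - Real.log ((k:ℝ) * th m))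

lemma mu_br (hm : 2 ≤ m) {b : ℝ} (hb0 : 0 ≤ b) (hbt : b < th m) (j : ℕ) :
    mu m (br m b j) = ENNReal.ofReal (G m b (m + j) - G m b (m + j + 1)) := by
  have ht := th_pos hm
  set k : ℕ := m + j with hk
  have hmk : m ≤ k := Nat.le_add_right m j
  have hkt : 0 < (k:ℝ) * th m := kth_pos hm hmk
  have hbkt : 0 < b + (k:ℝ) * th m := by linarith
  have hc : (0:ℝ) ≤ 1 / (b + (k:ℝ) * th m) := by positivity
  have hcd : 1 / (b + (k:ℝ) * th m) ≤ 1 / ((k:ℝ) * th m) :=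
    one_div_le_one_div_of_le hkt (by linarith)
  have hd : 1 / ((k:ℝ) * th m) ≤ th m := by
    rw [div_le_iff₀ hkt]
    have hmth : (1:ℝ) = th m * ((m:ℝ) * th m) := by rw [m_th hm]; field_simp
    have hmk' : (m:ℝ) ≤ (k:ℝ) := by exact_mod_cast hmk
    have h5 : (m:ℝ) * th m ≤ (k:ℝ) * th m := by nlinarith
    have h6 := mul_le_mul_of_nonneg_left h5 ht.le
    linarith
  rw [br, ← hk, mu_Icc hm hc hcd hd]
  congr 1
  have hk0 : (k:ℝ) ≠ 0 := (lt_of_lt_of_le (mcast_pos hm) (by exact_mod_cast hmk)).ne'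
  have e1 : 1 + th m * (1 / ((k:ℝ) * th m)) = (((k:ℝ)+1) * th m) / ((k:ℝ) * th m) := by
    field_simp
  have hbk0 : th m * k + b ≠ 0 := (by linarith : 0 < th m * k + b).ne'
  have e2 : 1 + th m * (1 / (b + (k:ℝ) * th m)) = (b + ((k:ℝ)+1) * th m) / (b + (k:ℝ) * th m) := by
    field_simp; ring
  have hk1t : 0 < ((k:ℝ)+1) * th m := by nlinarith
  have hbk1t : 0 < b + ((k:ℝ)+1) * th m := by linarith
  rw [FF, FF, e1, e2, Real.log_div (ne_of_gt hk1t) (ne_of_gt hkt),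
    Real.log_div (ne_of_gt hbk1t) (ne_of_gt hbkt)]
  have ck : ((k+1 : ℕ) : ℝ) = (k:ℝ) + 1 := by push_cast; ring
  simp only [G, hk]
  push_cast
  ring

lemma G_nonneg_sub (hm : 2 ≤ m) {b : ℝ} (hb0 : 0 ≤ b) (j : ℕ) :
    0 ≤ G m b (m + j) - G m b (m + j + 1) := by
  have ht := th_pos hm
  set k : ℕ := m + j with hk
  have hmk : m ≤ k := Nat.le_add_right m j
  have hkt : 0 < (k:ℝ) * th m := kth_pos hm hmk
  have hbkt : 0 < b + (k:ℝ) * th m := by linarith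
  have hk1t : 0 < ((k:ℝ)+1) * th m := by nlinarith
  have hbk1t : 0 < b + ((k:ℝ)+1) * th m := by linarith
  have key : Real.log (((k:ℝ) * th m) * (b + ((k:ℝ)+1) * th m))
      ≤ Real.log ((b + (k:ℝ) * th m) * (((k:ℝ)+1) * th m)) := by
    apply Real.log_le_log (by positivity)
    nlinarith
  rw [Real.log_mul (ne_of_gt hkt) (ne_of_gt hbk1t),
      Real.log_mul (ne_of_gt hbkt) (ne_of_gt hk1t)] at key
  have hth : 0 ≤ 1 / th m := by positivity
  have h7 : Real.log (b + ((k:ℝ)+1) * th m) - Real.log (((k:ℝ)+1) * th m)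
      ≤ Real.log (b + (k:ℝ) * th m) - Real.log ((k:ℝ) * th m) := by linarith
  have h8 := mul_le_mul_of_nonneg_left h7 hth
  simp only [G, hk] at h8 ⊢
  push_cast at h8 ⊢
  linarith

lemma T_measurable : Measurable (T m) := by
  unfold T
  have h1 : Measurable fun x : ℝ => 1 / (x * th m) := by
    simp only [one_div]; exact (measurable_id.mul_const _).inv
  have h2 : Measurable fun x : ℝ => 1 / x := by
    simp only [one_div]; exact measurable_inv
  have h3 : Measurable fun x : ℝ => (⌊1 / (x * th m)⌋₊ : ℝ) :=
    measurable_from_top.comp h1.nat_floor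
  exact Measurable.ite (measurableSet_eq) measurable_const
    (h2.sub (measurable_const.mul h3))

lemma br_disjoint (hm : 2 ≤ m) {b : ℝ} (hb0 : 0 ≤ b) (hbt : b < th m) :
    Pairwise (Function.onFun Disjoint (br m b)) := by
  have ht := th_pos hm
  have key : ∀ i j : ℕ, i < j → Disjoint (br m b i) (br m b j) := by
    intro i j hij
    rw [Set.disjoint_left]
    rintro x ⟨hx1, _⟩ ⟨_, hx4⟩
    set ki : ℕ := m + i
    set kj : ℕ := m + j
    have hki : 0 < (ki:ℝ) * th m := kth_pos hm (Nat.le_add_right m i)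
    have hkj : 0 < (kj:ℝ) * th m := kth_pos hm (Nat.le_add_right m j)
    have hkij : (ki:ℝ) + 1 ≤ (kj:ℝ) := by
      have : ki + 1 ≤ kj := by omega
      exact_mod_cast this
    have hlt : b + (ki:ℝ) * th m < (kj:ℝ) * th m := by nlinarith
    have := one_div_lt_one_div_of_lt (by linarith) hlt
    linarith
  intro i j hij
  rcases lt_or_gt_of_ne hij with h | h
  · exact key i j h
  · exact (key j i h).symm

lemma G_tendsto (hm : 2 ≤ m) {b : ℝ} (hb0 : 0 ≤ b) :
    Tendsto (fun j : ℕ => G m b (m + j)) atTop (nhds 0) := by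
  have ht := th_pos hm
  have heq : ∀ j : ℕ, G m b (m + j) = (1 / th m) * Real.log (1 + b / (((m + j : ℕ):ℝ) * th m)) := by
    intro j
    have hkt : 0 < ((m + j : ℕ):ℝ) * th m := kth_pos hm (Nat.le_add_right m j)
    have hbkt : 0 < b + ((m + j : ℕ):ℝ) * th m := by linarith
    rw [G, ← Real.log_div (ne_of_gt hbkt) (ne_of_gt hkt)]
    congr 2
    field_simp
    ring
  simp only [heq]
  have h0 : Tendsto (fun j : ℕ => m + j) atTop atTop := by
    simpa [Nat.add_comm] using tendsto_add_atTop_nat m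
  have h1 : Tendsto (fun j : ℕ => ((m + j : ℕ) : ℝ)) atTop atTop :=
    tendsto_natCast_atTop_atTop.comp h0
  have h2 : Tendsto (fun j : ℕ => ((m + j : ℕ) : ℝ) * th m) atTop atTop :=
    h1.atTop_mul_const ht
  have h3 : Tendsto (fun j : ℕ => b / (((m + j : ℕ) : ℝ) * th m)) atTop (nhds 0) :=
    h2.const_div_atTop b
  have h4 : Tendsto (fun j : ℕ => 1 + b / (((m + j : ℕ) : ℝ) * th m)) atTop (nhds 1) := by
    simpa using h3.const_add 1
  have h5 := (Real.continuousAt_log one_ne_zero).tendsto.comp h4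
  rw [Real.log_one] at h5
  simpa using h5.const_mul (1 / th m)

lemma tsum_G (hm : 2 ≤ m) {b : ℝ} (hb0 : 0 ≤ b) :
    (∑' j : ℕ, ENNReal.ofReal (G m b (m + j) - G m b (m + j + 1)))
      = ENNReal.ofReal (G m b m) := by
  have hsum : HasSum (fun j : ℕ => G m b (m + j) - G m b (m + j + 1)) (G m b m) := by
    rw [hasSum_iff_tendsto_nat_of_nonneg (G_nonneg_sub hm hb0)]
    have hps : ∀ n : ℕ, ∑ i ∈ Finset.range n, (G m b (m + i) - G m b (m + i + 1))
        = G m b m - G m b (m + n) := by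
      intro n
      have := Finset.sum_range_sub' (fun j => G m b (m + j)) n
      simpa [add_assoc] using this
    simp only [hps]
    simpa using tendsto_const_nhds.sub (G_tendsto hm hb0)
  rw [← ENNReal.ofReal_tsum_of_nonneg (G_nonneg_sub hm hb0) hsum.summable, hsum.tsum_eq]

lemma G_m_eq_FF (hm : 2 ≤ m) {b : ℝ} (hb0 : 0 ≤ b) : G m b m = FF m b := by
  have ht := th_pos hm
  have hmt : 0 < (m:ℝ) * th m := kth_pos hm le_rfl
  have hbmt : 0 < b + (m:ℝ) * th m := by linarith
  have hq : (b + (m:ℝ) * th m) / ((m:ℝ) * th m) = 1 + th m * b := by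
    rw [m_th hm]
    field_simp
    ring
  rw [G, FF, ← Real.log_div (ne_of_gt hbmt) (ne_of_gt hmt), hq]

lemma mu_inter {S : Set ℝ} (hS : MeasurableSet S) : mu m S = mu m (S ∩ Ioc 0 (th m)) := by
  rw [mu_apply hS, mu_apply (hS.inter measurableSet_Ioc), inter_assoc, inter_self]

lemma T_mem_Ico (hm : 2 ≤ m) {x : ℝ} (hx : x ∈ Ioc 0 (th m)) : T m x ∈ Ico 0 (th m) := by
  have ht := th_pos hm
  obtain ⟨hx0, hxt⟩ := hx
  have hxne : x ≠ 0 := ne_of_gt hx0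
  rw [T, if_neg hxne]
  have hxtpos : 0 < x * th m := by positivity
  have hfl : (⌊1 / (x * th m)⌋₊ : ℝ) ≤ 1 / (x * th m) := Nat.floor_le (by positivity)
  have hfl2 : 1 / (x * th m) < (⌊1 / (x * th m)⌋₊ : ℝ) + 1 := Nat.lt_floor_add_one _
  have heq1 : (1 / (x * th m)) * (x * th m) = 1 := by field_simp
  constructor
  · have h0 := mul_le_mul_of_nonneg_right hfl hxtpos.le
    have h2 : th m * ⌊1 / (x * th m)⌋₊ ≤ 1 / x := by
      rw [le_div_iff₀ hx0]
      nlinarith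
    linarith
  · have h0 := mul_lt_mul_of_pos_right hfl2 hxtpos
    have h2 : 1 / x < th m * ((⌊1 / (x * th m)⌋₊ : ℝ) + 1) := by
      rw [div_lt_iff₀ hx0]
      nlinarith
    nlinarith

instance mu_fin : IsFiniteMeasure (mu m) := by
  constructor
  rw [mu_apply MeasurableSet.univ, univ_inter]
  calc ∫⁻ x in Ioc 0 (th m), den m x ≤ ∫⁻ _ in Ioc 0 (th m), 1 := by
        apply setLIntegral_mono' measurableSet_Ioc
        intro x hx
        rw [den]
        have ht0 : 0 ≤ th m := by rw [th]; positivity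
        have hle : (1:ℝ) ≤ 1 + th m * x := by nlinarith [hx.1]
        have : 1 / (1 + th m * x) ≤ 1 := by
          rw [div_le_one (by linarith)]; linarith
        exact le_trans (ENNReal.ofReal_le_ofReal this) (le_of_eq ENNReal.ofReal_one)
    _ = volume (Ioc 0 (th m)) := setLIntegral_one _
    _ < ⊤ := measure_Ioc_lt_top

lemma map_T_eq (hm : 2 ≤ m) : (mu m).map (T m) = mu m := by
  have ht := th_pos hm
  refine Measure.ext_of_Iic _ _ (fun b => ?_)
  rw [Measure.map_apply T_measurable measurableSet_Iic]
  rcases lt_or_ge b 0 with hb | hb0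
  · have h1 : T m ⁻¹' (Iic b) ∩ Ioc 0 (th m) = ∅ := by
      ext x
      simp only [mem_inter_iff, mem_preimage, mem_Iic, mem_Ioc, mem_empty_iff_false, iff_false]
      rintro ⟨h1, h2, h3⟩
      have := (T_mem_Ico hm ⟨h2, h3⟩).1
      linarith
    have h2 : Iic b ∩ Ioc 0 (th m) = ∅ := by
      ext x
      simp only [mem_inter_iff, mem_Iic, mem_Ioc, mem_empty_iff_false, iff_false]
      rintro ⟨h1, h2, h3⟩
      linarith
    rw [mu_apply (T_measurable measurableSet_Iic), mu_apply measurableSet_Iic, h1, h2]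
  rcases lt_or_ge b (th m) with hbt | hbt
  · -- main case 0 ≤ b < θ
    have hpre : MeasurableSet (T m ⁻¹' (Iic b)) := T_measurable measurableSet_Iic
    rw [mu_inter hpre, preimage_decomp hm hb0 hbt,
      measure_iUnion (br_disjoint hm hb0 hbt) (fun j => measurableSet_Icc)]
    simp_rw [mu_br hm hb0 hbt]
    rw [tsum_G hm hb0, G_m_eq_FF hm hb0]
    have hIic : Iic b ∩ Ioc 0 (th m) = Ioc 0 b := by
      ext x
      simp only [mem_inter_iff, mem_Iic, mem_Ioc]
      constructor
      · rintro ⟨h1, h2, h3⟩; exact ⟨h2, h1⟩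
      · rintro ⟨h1, h2⟩; exact ⟨h2, h1, le_trans h2 hbt.le⟩
    rw [mu_inter measurableSet_Iic, hIic, mu_Ioc hm le_rfl hb0 hbt.le]
    congr 1
    simp [FF]
  · -- b ≥ θ
    have h1 : T m ⁻¹' (Iic b) ∩ Ioc 0 (th m) = Ioc 0 (th m) := by
      ext x
      simp only [mem_inter_iff, mem_preimage, mem_Iic, mem_Ioc]
      constructor
      · rintro ⟨_, h⟩; exact h
      · intro h
        refine ⟨?_, h⟩
        have := (T_mem_Ico hm h).2
        linarith
    have h2 : Iic b ∩ Ioc 0 (th m) = Ioc 0 (th m) := by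
      ext x
      simp only [mem_inter_iff, mem_Iic, mem_Ioc]
      exact ⟨fun h => h.2, fun h => ⟨le_trans h.2 hbt, h⟩⟩
    rw [mu_apply (T_measurable measurableSet_Iic), mu_apply measurableSet_Iic, h1, h2]

/-- digit-lower-bound sets at level 1 -/
def D (m : ℕ) (φ : ℕ → ℝ) (n : ℕ) : Set ℝ := {y : ℝ | φ n < (⌊1 / (y * th m)⌋₊ : ℝ)}

lemma D_measurable (φ : ℕ → ℝ) (n : ℕ) : MeasurableSet (D m φ n) := by
  have h1 : Measurable fun y : ℝ => (⌊1 / (y * th m)⌋₊ : ℝ) := by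
    have : Measurable fun y : ℝ => 1 / (y * th m) := by
      simp only [one_div]; exact (measurable_id.mul_const _).inv
    exact measurable_from_top.comp this.nat_floor
  exact measurableSet_lt measurable_const h1

lemma FF_le_self (hm : 2 ≤ m) {z : ℝ} (hz : 0 ≤ z) : FF m z ≤ z := by
  have ht := th_pos hm
  have h1 : Real.log (1 + th m * z) ≤ th m * z := by
    have := Real.log_le_sub_one_of_pos (show (0:ℝ) < 1 + th m * z by nlinarith)
    linarith
  have h2 := mul_le_mul_of_nonneg_left h1 (le_of_lt (by positivity : (0:ℝ) < 1 / th m))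
  calc FF m z ≤ (1 / th m) * (th m * z) := h2
    _ = z := by field_simp

lemma mu_le_of_subset (hm : 2 ≤ m) {S : Set ℝ} (hS : MeasurableSet S) {c : ℝ} (hc : 0 ≤ c)
    (hsub : S ∩ Ioc 0 (th m) ⊆ Ioc 0 c) : mu m S ≤ ENNReal.ofReal c := by
  have ht := th_pos hm
  have hsub2 : S ∩ Ioc 0 (th m) ⊆ Ioc 0 (min c (th m)) := by
    intro x hx
    exact ⟨(hsub hx).1, le_min (hsub hx).2 hx.2.2⟩
  calc mu m S = mu m (S ∩ Ioc 0 (th m)) := mu_inter hS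
    _ ≤ mu m (Ioc 0 (min c (th m))) := measure_mono hsub2
    _ = ENNReal.ofReal (FF m (min c (th m)) - FF m 0) :=
        mu_Ioc hm le_rfl (le_min hc ht.le) (min_le_right _ _)
    _ ≤ ENNReal.ofReal c := by
        apply ENNReal.ofReal_le_ofReal
        have h0 : FF m 0 = 0 := by simp [FF]
        have := FF_le_self hm (le_min hc ht.le : (0:ℝ) ≤ min c (th m))
        have hmin : min c (th m) ≤ c := min_le_left _ _
        linarith

lemma mu_D_le (hm : 2 ≤ m) (φ : ℕ → ℝ) {n : ℕ} (hφn : 0 < φ n) :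
    mu m (D m φ n) ≤ ENNReal.ofReal ((1 / th m) * (1 / φ n)) := by
  have ht := th_pos hm
  refine mu_le_of_subset hm (D_measurable φ n) (by positivity) ?_
  rintro y ⟨hy1, hy2, hy3⟩
  refine ⟨hy2, ?_⟩
  have hyt : 0 < y * th m := by positivity
  have hfl : (⌊1 / (y * th m)⌋₊ : ℝ) ≤ 1 / (y * th m) := Nat.floor_le (by positivity)
  have h1 : φ n < 1 / (y * th m) := lt_of_lt_of_le hy1 hfl
  have h2 : y * th m < 1 / φ n := by
    rw [lt_div_iff₀ hφn]
    rw [lt_div_iff₀ hyt] at h1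
    linarith
  rw [show (1 / th m) * (1 / φ n) = (1 / φ n) / th m by ring, le_div_iff₀ ht]
  linarith

theorem stmt_8' (hm : 2 ≤ m) (φ : ℕ → ℝ) (hφ : ∀ n, 1 ≤ n → 0 < φ n)
    (hs : Summable fun n : ℕ => 1 / φ (n + 1)) :
    lam m {x | x ∈ Omega m ∧ {n : ℕ | 1 ≤ n ∧ φ n < (a m n x : ℝ)}.Infinite} = 0 := by
  have ht := th_pos hm
  haveI : IsFiniteMeasure (mu m) := mu_fin
  set E : ℕ → Set ℝ := fun j => (T m)^[j] ⁻¹' (D m φ (j + 1)) with hE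
  have hEmeas : ∀ j, MeasurableSet (E j) := fun j =>
    (T_measurable.iterate j) (D_measurable φ (j+1))
  have hmp : MeasurePreserving (T m) (mu m) (mu m) := ⟨T_measurable, map_T_eq hm⟩
  have hmuE : ∀ j, mu m (E j) = mu m (D m φ (j+1)) := fun j =>
    (hmp.iterate j).measure_preimage (D_measurable φ (j+1)).nullMeasurableSet
  -- summability
  have htsum : (∑' j, mu m (E j)) ≠ ⊤ := by
    have hb : ∀ j : ℕ, mu m (E j) ≤ ENNReal.ofReal ((1 / th m) * (1 / φ (j+1))) := by
      intro j
      rw [hmuE j]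
      exact mu_D_le hm φ (hφ (j+1) (Nat.le_add_left 1 j))
    have hnn : ∀ j : ℕ, 0 ≤ (1 / th m) * (1 / φ (j+1)) := by
      intro j
      have := hφ (j+1) (Nat.le_add_left 1 j)
      positivity
    have hsum2 : Summable fun j : ℕ => (1 / th m) * (1 / φ (j+1)) := hs.mul_left _
    have hle : (∑' j, mu m (E j)) ≤ ENNReal.ofReal (∑' j, (1 / th m) * (1 / φ (j+1))) := by
      calc (∑' j, mu m (E j)) ≤ ∑' j, ENNReal.ofReal ((1 / th m) * (1 / φ (j+1))) :=
            ENNReal.tsum_le_tsum hb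
        _ = ENNReal.ofReal (∑' j, (1 / th m) * (1 / φ (j+1))) :=
            (ENNReal.ofReal_tsum_of_nonneg hnn hsum2).symm
    exact ne_top_of_le_ne_top ENNReal.ofReal_ne_top hle
  have hlimsup : mu m (limsup E atTop) = 0 := measure_limsup_atTop_eq_zero htsum
  -- inclusion
  set A : Set ℝ := {x | x ∈ Omega m ∧ {n : ℕ | 1 ≤ n ∧ φ n < (a m n x : ℝ)}.Infinite} with hA
  have hincl : A ⊆ limsup E atTop := by
    intro x hx
    rw [limsup_eq_iInf_iSup_of_nat]
    simp only [iInf_eq_iInter, iSup_eq_iUnion, mem_iInter, mem_iUnion]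
    intro n0
    obtain ⟨k, hk, hkgt⟩ := hx.2.exists_gt n0
    refine ⟨k - 1, by omega, ?_⟩
    have hk1 : k - 1 + 1 = k := by omega
    simp only [hE, mem_preimage, D, mem_setOf_eq, hk1]
    have := hk.2
    rw [a] at this
    exact this
  have hmeasL : MeasurableSet (limsup E atTop) := by
    rw [limsup_eq_iInf_iSup_of_nat]
    simp only [iInf_eq_iInter, iSup_eq_iUnion]
    exact MeasurableSet.iInter fun n =>
      MeasurableSet.iUnion fun i => MeasurableSet.iUnion fun _ => hEmeas i
  -- comparison with volume
  set S : Set ℝ := limsup E atTop ∩ Ioc 0 (th m) with hS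
  have hSmeas : MeasurableSet S := hmeasL.inter measurableSet_Ioc
  have hvolS : volume S = 0 := by
    have hmuS : mu m S = 0 :=
      le_antisymm (le_trans (measure_mono inter_subset_left) hlimsup.le) (zero_le)
    have hds : ∀ x ∈ S, (1:ℝ≥0∞) ≤ 2 * den m x := by
      intro x hxS
      obtain ⟨hx0, hxt⟩ := hxS.2
      have hle : th m * x ≤ 1/2 := le_trans (by nlinarith) (th_sq_le hm)
      have h12 : (1/2 : ℝ) ≤ 1 / (1 + th m * x) := by
        rw [div_le_div_iff₀ (by norm_num) (by nlinarith)]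
        nlinarith
      have e1 : ENNReal.ofReal (1/2 : ℝ) = 2⁻¹ := by
        rw [one_div, ENNReal.ofReal_inv_of_pos (by norm_num : (0:ℝ) < 2)]
        norm_num
      calc (1:ℝ≥0∞) = 2 * ENNReal.ofReal (1/2 : ℝ) := by
            rw [e1, ENNReal.mul_inv_cancel (by norm_num) (by norm_num)]
        _ ≤ 2 * den m x := by
            gcongr
            exact ENNReal.ofReal_le_ofReal h12
    have h1 : volume S = ∫⁻ _ in S, 1 := (setLIntegral_one S).symm
    have h2 : (∫⁻ _ in S, (1:ℝ≥0∞)) ≤ ∫⁻ x in S, 2 * den m x :=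
      setLIntegral_mono' hSmeas hds
    have h3 : (∫⁻ x in S, 2 * den m x) = 2 * ∫⁻ x in S, den m x := by
      rw [lintegral_const_mul _ den_measurable]
    have h4 : (∫⁻ x in S, den m x) = mu m S := by
      rw [mu_apply hSmeas, inter_eq_self_of_subset_left (by exact inter_subset_right : S ⊆ Ioc 0 (th m))]
    rw [h1]
    refine le_antisymm ?_ (zero_le)
    calc (∫⁻ _ in S, (1:ℝ≥0∞)) ≤ 2 * mu m S := by rw [← h4, ← h3]; exact h2
      _ = 0 := by rw [hmuS, mul_zero]
  have hvolA : volume A = 0 := by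
    refine le_antisymm ?_ (zero_le)
    calc volume A ≤ volume S := measure_mono (fun x hx => ⟨hincl hx, ⟨hx.1.1.1, hx.1.1.2.le⟩⟩)
      _ = 0 := hvolS

  rw [lam, hvolA]
  simp

/-- Borel–Bernstein, convergence part: if ∑ 1/φ(n) < ∞ then
λ_θ({x ∈ Ω : a_n(x) > φ(n) i.o.}) = 0. -/
theorem stmt_8 (m : ℕ) (hm : 2 ≤ m) (φ : ℕ → ℝ) (hφ : ∀ n, 1 ≤ n → 0 < φ n)
    (hs : Summable fun n : ℕ => 1 / φ (n + 1)) :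
    lam m {x | x ∈ Omega m ∧ {n : ℕ | 1 ≤ n ∧ φ n < (a m n x : ℝ)}.Infinite} = 0 := by
  exact stmt_8' hm φ hφ hs

end Theta
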